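/- Let L ⊆ Σ* be any language such that: (1) L_C(ω) ⊆ L; and (2) every word w ∈ L \ L_C(ω) admits a factorization w = w₁ u w₂ such that φ(u) is stable, ω(u) > 0, and ω(w') ≥ 0 for every prefix w' of w₁u. Then the Zariski closure of φ(L_C(ω)) in M_d(ℚ̄) equals the Zariski closure of φ(L). -/

import Mathlib

noncomputable section

/-- A matrix `M` is *stable* if `rank M = rank M²`. -/
def MatStable {d : ℕ} (M : Matrix (Fin d) (Fin d) ℚ) : Prop :=
  M.rank = (M * M).rank

/-- The algebraic closure of `ℚ`. -/
abbrev Qbar : Type := AlgebraicClosure ℚ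

/-- View a rational matrix inside `M_d(ℚ̄)`. -/
def liftMat {d : ℕ} (M : Matrix (Fin d) (Fin d) ℚ) : Matrix (Fin d) (Fin d) Qbar :=
  M.map (algebraMap ℚ Qbar)

/-- The Zariski closure of a set of `d × d` matrices over `ℚ̄`, identified with affine
space `ℚ̄^(d²)`: the common zero set of all polynomials vanishing on the set. -/
def matZClosure (d : ℕ) (S : Set (Matrix (Fin d) (Fin d) Qbar)) :
    Set (Matrix (Fin d) (Fin d) Qbar) :=
  {A | ∀ p : MvPolynomial (Fin d × Fin d) Qbar,
      (∀ B ∈ S, MvPolynomial.eval (fun ij => B ij.1 ij.2) p = 0) →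
      MvPolynomial.eval (fun ij => A ij.1 ij.2) p = 0}

/-- The coverability language of `ω`: words all of whose prefixes have nonnegative
weight. -/
def coverLang {α : Type*} (ω : List α → ℤ) : Set (List α) :=
  {w | ∀ u : List α, u <+: w → 0 ≤ ω u}

/-! ### Auxiliary material -/

open Polynomial in
lemma stable_exists_pseudo {d : ℕ} (M : Matrix (Fin d) (Fin d) ℚ) (h : MatStable M) :
    ∃ X : Matrix (Fin d) (Fin d) ℚ, M * X = X * M ∧ M * M * X = M ∧ M * X * X = X := by
  classical
  suffices hq : ∃ q : ℚ[X], Polynomial.aeval M (X ^ 2 * q) = M by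
    obtain ⟨q, hq⟩ := hq
    set a := (Polynomial.aeval M : ℚ[X] →ₐ[ℚ] Matrix (Fin d) (Fin d) ℚ) with ha
    have hred : ∀ p : ℚ[X], a (p * (X ^ 2 * q)) = a (p * X) := by
      intro p
      rw [map_mul, hq, map_mul, Polynomial.aeval_X]
    have hM : M = a X := (Polynomial.aeval_X M).symm
    refine ⟨a (q ^ 2 * X), ?_, ?_, ?_⟩
    · rw [hM, ← map_mul, ← map_mul, mul_comm]
    · calc M * M * a (q ^ 2 * X)
          = a (X * X * (q ^ 2 * X)) := by rw [hM, ← map_mul, ← map_mul]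
        _ = a ((q * X) * (X ^ 2 * q)) := congrArg a (by ring)
        _ = a ((q * X) * X) := hred _
        _ = a (1 * (X ^ 2 * q)) := congrArg a (by ring)
        _ = a (1 * X) := hred _
        _ = M := by rw [one_mul, ← hM]
    · calc M * a (q ^ 2 * X) * a (q ^ 2 * X)
          = a (X * (q ^ 2 * X) * (q ^ 2 * X)) := by rw [hM, ← map_mul, ← map_mul]
        _ = a ((q ^ 3 * X) * (X ^ 2 * q)) := congrArg a (by ring)
        _ = a ((q ^ 3 * X) * X) := hred _
        _ = a ((q ^ 2) * (X ^ 2 * q)) := congrArg a (by ring)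
        _ = a ((q ^ 2) * X) := hred _
  set f := M.mulVecLin with hf
  have hr2 : LinearMap.range ((M * M).mulVecLin) = LinearMap.range f := by
    apply Submodule.eq_of_le_of_finrank_le
    · rw [Matrix.mulVecLin_mul]
      exact LinearMap.range_comp_le_range _ _
    · exact le_of_eq h
  have hrn : ∀ n : ℕ, 1 ≤ n → LinearMap.range ((M ^ n).mulVecLin) = LinearMap.range f := by
    intro n hn
    induction n with
    | zero => omega
    | succ n ih =>
      rcases Nat.eq_or_lt_of_le hn with h1 | h1
      · simp [← h1, pow_one, hf]
      · have hn' : 1 ≤ n := by omega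
        have hpow : M ^ (n + 1) = M * M ^ n := by rw [pow_succ']
        rw [hpow, Matrix.mulVecLin_mul, LinearMap.range_comp, ih hn',
          ← LinearMap.range_comp, ← Matrix.mulVecLin_mul, hr2]
  obtain ⟨g, hgeq, hgnd⟩ := (Matrix.charpoly M).exists_eq_pow_rootMultiplicity_mul_and_not_dvd
    (Matrix.charpoly_monic M).ne_zero 0
  set s := (Matrix.charpoly M).rootMultiplicity 0 with hs
  rw [map_zero, sub_zero] at hgeq hgnd
  have hg0 : g.coeff 0 ≠ 0 := by rwa [Polynomial.X_dvd_iff] at hgnd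
  have hcol : ∀ j : Fin d, ∃ x : Fin d → ℚ, (M ^ (s + 1)).mulVec x = fun i => M i j := by
    intro j
    have hmem : (fun i => M i j) ∈ LinearMap.range ((M ^ (s+1)).mulVecLin) := by
      rw [hrn (s+1) (by omega)]
      refine ⟨Pi.single j 1, ?_⟩
      rw [hf, Matrix.mulVecLin_apply, Matrix.mulVec_single]
      simp
      rfl
    obtain ⟨x, hx⟩ := hmem
    exact ⟨x, hx⟩
  choose x hx using hcol
  set Z : Matrix (Fin d) (Fin d) ℚ := Matrix.of (fun i j => x j i) with hZ
  have hMZ : M ^ (s + 1) * Z = M := by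
    ext i j
    have h2 := congrFun (hx j) i
    simpa [Matrix.mul_apply, Matrix.mulVec, dotProduct, hZ] using h2
  have hCH : M ^ s * Polynomial.aeval M g = 0 := by
    have h3 := Matrix.aeval_self_charpoly M
    rw [hgeq] at h3
    simpa [map_mul, map_pow, Polynomial.aeval_X] using h3
  have hcomm : M * Polynomial.aeval M g = Polynomial.aeval M g * M := by
    have h1 : Polynomial.aeval M (X * g) = M * Polynomial.aeval M g := by
      rw [map_mul, Polynomial.aeval_X]
    have h2 : Polynomial.aeval M (g * X) = Polynomial.aeval M g * M := by
      rw [map_mul, Polynomial.aeval_X]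
    rw [← h1, ← h2, mul_comm]
  have hc : Commute M (Polynomial.aeval M g) := hcomm
  have hMg : Polynomial.aeval M g * M = 0 := by
    have h4 : Polynomial.aeval M g * M ^ (s + 1) = 0 := by
      calc Polynomial.aeval M g * M ^ (s+1)
          = (Polynomial.aeval M g * M ^ s) * M := by rw [pow_succ, ← mul_assoc]
        _ = (M ^ s * Polynomial.aeval M g) * M := by rw [((hc.pow_left s).symm).eq]
        _ = 0 := by rw [hCH, zero_mul]
    calc Polynomial.aeval M g * M = Polynomial.aeval M g * (M ^ (s+1) * Z) := by rw [hMZ]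
      _ = (Polynomial.aeval M g * M ^ (s+1)) * Z := by rw [mul_assoc]
      _ = 0 := by rw [h4, zero_mul]
  set c := g.coeff 0 with hcdef
  have hgsplit : X * g.divX + C c = g := Polynomial.X_mul_divX_add g
  refine ⟨(-c⁻¹) • g.divX, ?_⟩
  have hsm : Polynomial.aeval M ((X:ℚ[X]) ^ 2 * ((-c⁻¹) • g.divX)) =
      (-c⁻¹) • (M * (M * Polynomial.aeval M g.divX)) := by
    rw [mul_smul_comm, map_smul, map_mul, map_pow, Polynomial.aeval_X, pow_two, mul_assoc]
  rw [hsm]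
  set H := Polynomial.aeval M g.divX with hH
  have hexp : Polynomial.aeval M g = M * H + c • 1 := by
    rw [← hgsplit, map_add, map_mul, Polynomial.aeval_X, Polynomial.aeval_C,
      Algebra.algebraMap_eq_smul_one]
  have hkey : M * H * M + c • M = 0 := by
    have h6 := hMg
    rw [hexp, add_mul, smul_mul_assoc, one_mul] at h6
    exact h6
  have hHM : Commute M H := by
    have h1 : Polynomial.aeval M (X * g.divX) = M * H := by rw [map_mul, Polynomial.aeval_X]
    have h2 : Polynomial.aeval M (g.divX * X) = H * M := by rw [map_mul, Polynomial.aeval_X]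
    show M * H = H * M
    rw [← h1, ← h2, mul_comm]
  have h5 : M * H * M = M * (M * H) := by rw [mul_assoc, ← hHM.eq]
  rw [h5] at hkey
  have hMH : M * (M * H) = -(c • M) := eq_neg_of_add_eq_zero_left hkey
  rw [hMH, smul_neg, neg_smul, neg_neg, smul_smul, inv_mul_cancel₀ hg0, one_smul]

open MvPolynomial

/-- evaluation of a polynomial at (the entries of) a matrix, as a ring hom -/
def evAt {d : ℕ} (Y : Matrix (Fin d) (Fin d) Qbar) :
    MvPolynomial (Fin d × Fin d) Qbar →+* Qbar :=
  MvPolynomial.eval (fun ij => Y ij.1 ij.2)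

lemma evAt_apply {d : ℕ} (Y : Matrix (Fin d) (Fin d) Qbar) (p) :
    evAt Y p = MvPolynomial.eval (fun ij => Y ij.1 ij.2) p := rfl

/-- substitution representing `Y ↦ U * Y` -/
def leftSub {d : ℕ} (U : Matrix (Fin d) (Fin d) Qbar) :
    MvPolynomial (Fin d × Fin d) Qbar →+* MvPolynomial (Fin d × Fin d) Qbar :=
  (bind₁ (fun ij : Fin d × Fin d =>
    ∑ l : Fin d, C (U ij.1 l) * X (l, ij.2))).toRingHom

lemma evAt_leftSub {d : ℕ} (U Y : Matrix (Fin d) (Fin d) Qbar) (p) :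
    evAt Y (leftSub U p) = evAt (U * Y) p := by
  show MvPolynomial.eval _ (bind₁ _ p) = _
  rw [MvPolynomial.eval, eval₂Hom_bind₁, evAt_apply, MvPolynomial.eval]
  refine eval₂Hom_congr rfl (funext fun ij => ?_) rfl
  simp only [map_sum, map_mul, eval₂Hom_C, eval₂Hom_X', RingHom.id_apply, Matrix.mul_apply]

/-- substitution representing `Y ↦ A * Y * B + C0` -/
def affSub {d : ℕ} (A B C0 : Matrix (Fin d) (Fin d) Qbar) :
    MvPolynomial (Fin d × Fin d) Qbar →+* MvPolynomial (Fin d × Fin d) Qbar :=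
  (bind₁ (fun ij : Fin d × Fin d =>
    C (C0 ij.1 ij.2) + ∑ l : Fin d, ∑ m : Fin d,
      C (A ij.1 l * B m ij.2) * X (l, m))).toRingHom

lemma evAt_affSub {d : ℕ} (A B C0 Y : Matrix (Fin d) (Fin d) Qbar) (p) :
    evAt Y (affSub A B C0 p) = evAt (A * Y * B + C0) p := by
  show MvPolynomial.eval _ (bind₁ _ p) = _
  rw [MvPolynomial.eval, eval₂Hom_bind₁, evAt_apply, MvPolynomial.eval]
  refine eval₂Hom_congr rfl (funext fun ij => ?_) rfl
  simp only [map_add, map_sum, map_mul, eval₂Hom_C, eval₂Hom_X', RingHom.id_apply,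
    Matrix.add_apply, Matrix.mul_apply]
  rw [add_comm]
  congr 1
  rw [Finset.sum_comm]
  apply Finset.sum_congr rfl
  intro m _
  rw [Finset.sum_mul]
  apply Finset.sum_congr rfl
  intro l _
  ring

set_option maxHeartbeats 2000000 in
/-- key closure lemma -/
lemma zkey {d : ℕ} (M Xm A B : Matrix (Fin d) (Fin d) Qbar)
    (hXM : M * Xm = Xm * M) (hMMX : M * M * Xm = M) (hEX : M * Xm * Xm = Xm)
    (N : ℕ) (p : MvPolynomial (Fin d × Fin d) Qbar)
    (hp : ∀ n : ℕ, N ≤ n → evAt (A * M ^ n * B) p = 0) :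
    evAt (A * M * B) p = 0 := by
  classical
  obtain ⟨E, hE⟩ : ∃ E, E = M * Xm := ⟨_, rfl⟩
  have hME : M * E = M := by rw [hE, ← mul_assoc, hMMX]
  have hEM : E * M = M := by rw [hE, mul_assoc, ← hXM, ← mul_assoc, hMMX]
  have hEE : E * E = E := by
    rw [hE]
    calc M * Xm * (M * Xm) = M * (Xm * M) * Xm := by rw [mul_assoc, mul_assoc, mul_assoc]
      _ = M * (M * Xm) * Xm := by rw [← hXM]
      _ = M * M * Xm * Xm := by rw [← mul_assoc]
      _ = M * Xm := by rw [hMMX]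
  have hEXm : E * Xm = Xm := by rw [hE]; exact hEX
  obtain ⟨G, hG⟩ : ∃ G, G = M + 1 - E := ⟨_, rfl⟩
  obtain ⟨G', hG'⟩ : ∃ G', G' = Xm + 1 - E := ⟨_, rfl⟩
  have hGG' : G * G' = 1 := by
    have expand : (M + 1 - E) * (Xm + 1 - E)
        = (M * Xm + M - M * E) + (Xm + 1 - E) - (E * Xm + E - E * E) := by
      noncomm_ring
    rw [hG, hG', expand, hME, hEXm, hEE, ← hE]
    abel
  have hG'G : G' * G = 1 := mul_eq_one_comm.mp hGG'
  have hpowE : ∀ n : ℕ, M ^ (n + 1) * E = M ^ (n + 1) := by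
    intro n
    rw [pow_succ, mul_assoc, hME]
  have hGpow : ∀ n : ℕ, 1 ≤ n → G ^ n = M ^ n + 1 - E := by
    intro n hn
    induction n with
    | zero => omega
    | succ n ih =>
      rcases Nat.eq_or_lt_of_le hn with h1 | h1
      · rw [← h1, pow_one, pow_one, hG]
      · have hn' : 1 ≤ n := by omega
        have expand : (M ^ n + 1 - E) * (M + 1 - E)
            = (M ^ n * M + M ^ n - M ^ n * E) + (M + 1 - E) - (E * M + E - E * E) := by
          noncomm_ring
        obtain ⟨n', rfl⟩ : ∃ n', n = n' + 1 := ⟨n - 1, by omega⟩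
        rw [pow_succ, ih hn', hG, expand, hpowE, hEM, hEE, ← pow_succ]
        abel
  have hG'Gpow : ∀ n : ℕ, G' * G ^ (n + 1) = G ^ n := by
    intro n
    rw [pow_succ', ← mul_assoc, hG'G, one_mul]
  set I : ℕ →o Ideal (MvPolynomial (Fin d × Fin d) Qbar) :=
    ⟨fun k => ⨅ (n : ℕ) (_ : k ≤ n), RingHom.ker (evAt (G ^ n)),
      fun k k' hk => le_iInf₂ fun n hn => iInf₂_le n (hk.trans hn)⟩ with hI
  have memI : ∀ (k : ℕ) (q : MvPolynomial (Fin d × Fin d) Qbar),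
      q ∈ I k ↔ ∀ n, k ≤ n → evAt (G ^ n) q = 0 := by
    intro k q
    show q ∈ (⨅ (n : ℕ) (_ : k ≤ n), RingHom.ker (evAt (G ^ n))) ↔ _
    simp only [hI, OrderHom.coe_mk, Submodule.mem_iInf, RingHom.mem_ker]
  obtain ⟨m, hm⟩ := monotone_stabilizes_iff_noetherian.mpr
    (by infer_instance : IsNoetherian (MvPolynomial (Fin d × Fin d) Qbar)
      (MvPolynomial (Fin d × Fin d) Qbar)) I
  have down : ∀ (j : ℕ) (q : MvPolynomial (Fin d × Fin d) Qbar),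
      q ∈ I m → ∀ n : ℕ, 1 ≤ n → m - j ≤ n → evAt (G ^ n) q = 0 := by
    intro j
    induction j with
    | zero => intro q hq n _ hn; exact (memI m q).mp hq n hn
    | succ j ih =>
      intro q hq n hn1 hnj
      by_cases hc : m - j ≤ n
      · exact ih q hq n hn1 hc
      · have hq'' : leftSub G' q ∈ I (m + 1) := by
          rw [memI]
          intro l hl
          rw [evAt_leftSub]
          obtain ⟨l', rfl⟩ : ∃ l', l = l' + 1 := ⟨l - 1, by omega⟩
          rw [hG'Gpow]
          exact (memI m q).mp hq l' (by omega)
        have hq' : leftSub G' q ∈ I m := by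
          rw [hm (m + 1) (by omega)]
          exact hq''
        have h2 := ih (leftSub G' q) hq' (n + 1) (by omega) (by omega)
        rwa [evAt_leftSub, hG'Gpow] at h2
  set q : MvPolynomial (Fin d × Fin d) Qbar := affSub A B (-(A * (1 - E) * B)) p with hqdef
  have hqeval : ∀ n : ℕ, 1 ≤ n → evAt (G ^ n) q = evAt (A * M ^ n * B) p := by
    intro n hn
    rw [hqdef, evAt_affSub, hGpow n hn]
    have harr : A * (M ^ n + 1 - E) * B + -(A * (1 - E) * B) = A * M ^ n * B := by
      noncomm_ring
    rw [harr]
  have hqIm : q ∈ I m := by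
    have hqIN : q ∈ I (max (N + 1) (m + 1)) := by
      rw [memI]
      intro n hn
      rw [hqeval n (by omega)]
      exact hp n (by omega)
    rw [hm (max (N + 1) (m + 1)) (by omega)]
    exact hqIN
  have h1 := down m q hqIm 1 le_rfl (by omega)
  rwa [hqeval 1 le_rfl, pow_one] at h1

/-! ### list and lifting helpers -/

def reppow {α : Type*} (u : List α) : ℕ → List α
  | 0 => []
  | n + 1 => reppow u n ++ u

lemma prefix_cases {α : Type*} {v a b : List α} (h : v <+: a ++ b) :
    v <+: a ∨ ∃ v', v' <+: b ∧ v = a ++ v' := by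
  by_cases hl : v.length ≤ a.length
  · exact Or.inl (List.prefix_of_prefix_length_le h (a.prefix_append b) hl)
  · right
    have hav : a <+: v :=
      List.prefix_of_prefix_length_le (a.prefix_append b) h (by omega)
    obtain ⟨v', rfl⟩ := hav
    exact ⟨v', (List.prefix_append_right_inj a).mp h, rfl⟩

lemma liftMat_mul {d : ℕ} (A B : Matrix (Fin d) (Fin d) ℚ) :
    liftMat (A * B) = liftMat A * liftMat B :=
  Matrix.map_mul (f := algebraMap ℚ Qbar)

lemma liftMat_one {d : ℕ} : liftMat (1 : Matrix (Fin d) (Fin d) ℚ) = 1 :=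
  Matrix.map_one _ (map_zero _) (map_one _)

lemma liftMat_pow {d : ℕ} (A : Matrix (Fin d) (Fin d) ℚ) (n : ℕ) :
    liftMat (A ^ n) = liftMat A ^ n := by
  induction n with
  | zero => simpa using liftMat_one
  | succ n ih => rw [pow_succ, liftMat_mul, ih, pow_succ]

theorem cover_closure_of_approximation {α : Type*} [Fintype α] (d : ℕ)
    (φ : List α → Matrix (Fin d) (Fin d) ℚ)
    (hφ_nil : φ [] = 1) (hφ_app : ∀ u v : List α, φ (u ++ v) = φ u * φ v)
    (ω : List α → ℤ)
    (hω_nil : ω [] = 0) (hω_app : ∀ u v : List α, ω (u ++ v) = ω u + ω v)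
    (hω_letter : ∀ σ : α, ω [σ] = -1 ∨ ω [σ] = 0 ∨ ω [σ] = 1)
    (L : Set (List α))
    (hsub : coverLang ω ⊆ L)
    (hfac : ∀ w ∈ L \ coverLang ω,
        ∃ w₁ u w₂ : List α, w = w₁ ++ u ++ w₂ ∧ MatStable (φ u) ∧ 0 < ω u ∧
          ∀ w' : List α, w' <+: (w₁ ++ u) → 0 ≤ ω w') :
    matZClosure d ((fun w => liftMat (φ w)) '' coverLang ω) =
      matZClosure d ((fun w => liftMat (φ w)) '' L) := by
  classical
  -- basic facts about ω
  have hωlen : ∀ v : List α, -(v.length : ℤ) ≤ ω v := by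
    intro v
    induction v with
    | nil => simp [hω_nil]
    | cons σ t ih =>
      have : ω (σ :: t) = ω [σ] + ω t := hω_app [σ] t
      rw [this]
      have hσ : -1 ≤ ω [σ] := by rcases hω_letter σ with h | h | h <;> omega
      have hlen : ((σ :: t).length : ℤ) = (t.length : ℤ) + 1 := by
        simp [List.length_cons]
      omega
  -- main vanishing transfer
  have main : ∀ p : MvPolynomial (Fin d × Fin d) Qbar,
      (∀ B ∈ (fun w => liftMat (φ w)) '' coverLang ω,
        MvPolynomial.eval (fun ij => B ij.1 ij.2) p = 0) →
      ∀ w ∈ L, MvPolynomial.eval (fun ij => liftMat (φ w) ij.1 ij.2) p = 0 := by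
    intro p hp w hw
    by_cases hwc : w ∈ coverLang ω
    · exact hp _ ⟨w, hwc, rfl⟩
    obtain ⟨w₁, u, w₂, heq, hst, hωu, hpre⟩ := hfac w ⟨hw, hwc⟩
    obtain ⟨X₀, hc1, hc2, hc3⟩ := stable_exists_pseudo (φ u) hst
    have hωu1 : 1 ≤ ω u := hωu
    -- φ and ω on reppow
    have hφrep : ∀ n : ℕ, φ (reppow u n) = (φ u) ^ n := by
      intro n
      induction n with
      | zero => simpa [reppow] using hφ_nil
      | succ n ih => rw [reppow, hφ_app, ih, pow_succ]
    have hωrep : ∀ n : ℕ, ω (reppow u n) = (n : ℤ) * ω u := by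
      intro n
      induction n with
      | zero => simpa [reppow] using hω_nil
      | succ n ih => rw [reppow, hω_app, ih]; push_cast; ring
    have hw₁ : 0 ≤ ω w₁ := hpre w₁ (w₁.prefix_append u)
    -- coverage of the pumped words
    have hcov : ∀ n : ℕ, w₂.length + 1 ≤ n → ((w₁ ++ reppow u n) ++ w₂) ∈ coverLang ω := by
      intro n hn v hv
      have hA : ∀ (k : ℕ) (v : List α), v <+: w₁ ++ reppow u k → 0 ≤ ω v := by
        intro k
        induction k with
        | zero =>
          intro v hv
          rw [reppow, List.append_nil] at hv
          exact hpre v (hv.trans (w₁.prefix_append u))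
        | succ k ih =>
          intro v hv
          rw [reppow, ← List.append_assoc] at hv
          rcases prefix_cases hv with hv1 | ⟨v', hv', rfl⟩
          · exact ih v hv1
          · have h1 : ω ((w₁ ++ reppow u k) ++ v') = (ω w₁ + ω v') + (k : ℤ) * ω u := by
              rw [hω_app, hω_app, hωrep]; ring
            have h2 : 0 ≤ ω (w₁ ++ v') := hpre _ ((List.prefix_append_right_inj w₁).mpr hv')
            rw [hω_app] at h2
            have h3 : 0 ≤ (k : ℤ) * ω u := mul_nonneg (by positivity) (by omega)
            rw [h1]
            omega
      rcases prefix_cases (v := v) (a := w₁ ++ reppow u n) (b := w₂) hv with hv1 | ⟨v₂, hv₂, rfl⟩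
      · exact hA n v hv1
      · have h1 : ω ((w₁ ++ reppow u n) ++ v₂) = ω w₁ + (n : ℤ) * ω u + ω v₂ := by
          rw [hω_app, hω_app, hωrep]
        have h2 : (n : ℤ) ≤ (n : ℤ) * ω u := by nlinarith
        have h3 : -(v₂.length : ℤ) ≤ ω v₂ := hωlen v₂
        have h4 : (v₂.length : ℤ) ≤ (w₂.length : ℤ) := by
          exact_mod_cast hv₂.length_le
        have h5 : ((w₂.length : ℤ) + 1) ≤ (n : ℤ) := by exact_mod_cast hn
        rw [h1]
        omega
    -- vanishing along the pumped family
    set A' := liftMat (φ w₁) with hA'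
    set M' := liftMat (φ u) with hM'
    set B' := liftMat (φ w₂) with hB'
    have hvan : ∀ n : ℕ, w₂.length + 1 ≤ n → evAt (A' * M' ^ n * B') p = 0 := by
      intro n hn
      have hmem : liftMat (φ ((w₁ ++ reppow u n) ++ w₂))
          ∈ (fun w => liftMat (φ w)) '' coverLang ω :=
        ⟨_, hcov n hn, rfl⟩
      have hval := hp _ hmem
      have hφval : liftMat (φ ((w₁ ++ reppow u n) ++ w₂)) = A' * M' ^ n * B' := by
        rw [hφ_app, hφ_app, hφrep, liftMat_mul, liftMat_mul, liftMat_pow, hA', hM', hB']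
      rw [hφval] at hval
      exact hval
    have hfin := zkey M' (liftMat X₀) A' B'
      (by rw [← liftMat_mul, ← liftMat_mul, hc1])
      (by rw [← liftMat_mul, ← liftMat_mul, hc2])
      (by rw [← liftMat_mul, ← liftMat_mul, hc3])
      (w₂.length + 1) p hvan
    have hφw : liftMat (φ w) = A' * M' * B' := by
      rw [heq, hφ_app, hφ_app, liftMat_mul, liftMat_mul, hA', hM', hB', mul_assoc]
    rw [hφw]
    exact hfin
  -- conclude set equality
  ext A
  simp only [matZClosure, Set.mem_setOf_eq]
  constructor
  · intro h p hpL
    refine h p ?_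
    rintro B ⟨w, hwc, rfl⟩
    exact hpL _ ⟨w, hsub hwc, rfl⟩
  · intro h p hpC
    refine h p ?_
    rintro B ⟨w, hwL, rfl⟩
    exact main p hpC w hwL

end
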